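/- Let C be a unital C*-algebra, α : C → C an injective unital *-endomorphism, C_∞ the direct limit of (C, α) containing C, and α_∞ its induced automorphism. If (C, α) is minimal, then every nonzero α_∞-invariant closed ideal J of C_∞ satisfies J ∩ C ≠ (0); moreover J ∩ C is an α-invariant ideal of C, hence J ∩ C = C and J = C_∞. In particular minimality of (C, α) implies minimality of (C_∞, α_∞). -/

import Mathlib

open Polynomial in
lemma aux_cfc_mem {A : Type*} [CStarAlgebra A] [Nontrivial A]
    (J : TwoSidedIdeal A) (hJ : IsClosed (J : Set A))
    {w : A} (hw : IsSelfAdjoint w) (hwJ : w ∈ J)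
    {f : ℝ → ℝ} (hf : Continuous f) (hf0 : f 0 = 0) :
    cfc f w ∈ J := by
  have hclos : cfc f w ∈ closure (J : Set A) := by
    rw [Metric.mem_closure_iff]
    intro ε hε
    obtain ⟨p, hp⟩ := exists_polynomial_near_of_continuousOn (-‖w‖) ‖w‖ f
      hf.continuousOn (ε/3) (by positivity)
    set p₀ : ℝ[X] := p - Polynomial.C (p.eval 0) with hp₀
    have hspec : ∀ t ∈ spectrum ℝ w, t ∈ Set.Icc (-‖w‖) ‖w‖ := by
      intro t ht
      have h1 := spectrum.norm_le_norm_of_mem ht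
      rw [Real.norm_eq_abs] at h1
      exact abs_le.mp h1
    have h0 : (0:ℝ) ∈ Set.Icc (-‖w‖) ‖w‖ := by
      simp [norm_nonneg]
    have hmem : (Polynomial.aeval w) p₀ ∈ J := by
      obtain ⟨q, hq⟩ := Polynomial.X_dvd_iff.mpr
        (show p₀.coeff 0 = 0 by simp [hp₀, Polynomial.coeff_zero_eq_eval_zero])
      rw [hq, map_mul, Polynomial.aeval_X]
      exact J.mul_mem_right _ _ hwJ
    refine ⟨_, hmem, ?_⟩
    have he : cfc f w - (Polynomial.aeval w) p₀ = cfc (fun t => f t - p₀.eval t) w := by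
      rw [cfc_sub f (fun t => p₀.eval t) w hf.continuousOn
        (Polynomial.continuous p₀).continuousOn]
      rw [show (fun t => p₀.eval t) = p₀.eval from rfl, cfc_polynomial p₀ w hw]
    rw [dist_eq_norm, he]
    have hb : ‖cfc (fun t => f t - p₀.eval t) w‖ ≤ 2*ε/3 := by
      apply norm_cfc_le (by positivity)
      intro t ht
      have h1 := hp t (hspec t ht)
      have h2 := hp 0 h0
      rw [hf0, sub_zero] at h2
      simp only [hp₀, Polynomial.eval_sub, Polynomial.eval_C]
      rw [Real.norm_eq_abs, abs_le]
      have h1' := abs_lt.mp h1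
      have h2' := abs_lt.mp h2
      constructor <;> [linarith [h1'.1, h2'.1]; linarith [h1'.2, h2'.2]]
    linarith
  rwa [hJ.closure_eq] at hclos

lemma aux_hereditary {A : Type*} [CStarAlgebra A] [Nontrivial A]
    [PartialOrder A] [StarOrderedRing A]
    (J : TwoSidedIdeal A) (hJ : IsClosed (J : Set A))
    {z w : A} (hz : 0 ≤ z) (hzw : z ≤ w) (hwJ : w ∈ J) : z ∈ J := by
  have hw : 0 ≤ w := hz.trans hzw
  have hw' : IsSelfAdjoint w := .of_nonneg hw
  have hz' : IsSelfAdjoint z := .of_nonneg hz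
  have hclos : z ∈ closure (J : Set A) := by
    rw [Metric.mem_closure_iff]
    intro ε hε
    obtain ⟨κ, hκpos, hκlt⟩ : ∃ κ : ℝ, 0 < κ ∧ ‖z‖ * κ < ε^2 := by
      refine ⟨ε^2/(2*(‖z‖+1)), by positivity, ?_⟩
      rw [div_eq_mul_inv, ← mul_assoc]
      rw [show ‖z‖ * ε^2 = ε^2 * ‖z‖ by ring, mul_assoc, ← div_eq_mul_inv]
      calc ε^2 * (‖z‖ / (2*(‖z‖+1))) < ε^2 * 1 := by
            apply mul_lt_mul_of_pos_left _ (by positivity)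
            rw [div_lt_one (by positivity)]
            linarith [norm_nonneg z]
        _ = ε^2 := mul_one _
    set h : ℝ → ℝ := fun t => t/(|t| + κ) with hh
    have hhc : Continuous h := by
      apply Continuous.div continuous_id (continuous_abs.add continuous_const)
      intro t; exact (add_pos_of_nonneg_of_pos (abs_nonneg t) hκpos).ne'
    have hh0 : h 0 = 0 := by simp [hh]
    set u : A := cfc h w with hu
    have huJ : u ∈ J := aux_cfc_mem J hJ hw' hwJ hhc hh0
    have hu' : IsSelfAdjoint u := cfc_predicate h w
    have h1u : IsSelfAdjoint ((1:A) - u) := (IsSelfAdjoint.one (R := A)).sub hu'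
    have hwspec : ∀ t ∈ spectrum ℝ w, 0 ≤ t :=
      (StarOrderedRing.nonneg_iff_spectrum_nonneg (R := ℝ) w hw').mp hw
    have hone : (1:A) - u = cfc (fun t => 1 - h t) w := by
      rw [cfc_sub (fun _ => (1:ℝ)) h w (by fun_prop) hhc.continuousOn]
      rw [show (fun _ : ℝ => (1:ℝ)) = (1 : ℝ → ℝ) from rfl, cfc_one ℝ w]
    have hkey : ((1:A) - u) * w * ((1:A) - u) = cfc (fun t => (1 - h t) * t * (1 - h t)) w := by
      rw [hone]
      rw [cfc_mul _ _ w (by fun_prop) (by fun_prop),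
        cfc_mul _ _ w (by fun_prop) (by fun_prop), cfc_id' ℝ w]
    have hnorm1 : ‖((1:A) - u) * w * ((1:A) - u)‖ ≤ κ := by
      rw [hkey]
      apply norm_cfc_le hκpos.le
      intro t ht
      have ht0 := hwspec t ht
      have hd : 0 < t + κ := by positivity
      have he1 : h t = t/(t+κ) := by rw [hh]; simp [abs_of_nonneg ht0]
      have he2 : 1 - h t = κ/(t+κ) := by
        rw [he1, sub_div' hd.ne']
        congr 1
        ring
      rw [Real.norm_eq_abs, he2]
      have he3 : κ/(t+κ) * t * (κ/(t+κ)) = κ*t*κ/((t+κ)*(t+κ)) := by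
        rw [div_mul_eq_mul_div, div_mul_div_comm]
      rw [he3, abs_of_nonneg (by positivity), div_le_iff₀ (by positivity)]
      nlinarith [mul_nonneg (mul_nonneg hκpos.le ht0) ht0,
        mul_nonneg (mul_nonneg hκpos.le hκpos.le) hκpos.le,
        mul_nonneg (mul_nonneg hκpos.le hκpos.le) ht0]
    set v : A := ((1:A) - u) * z with hv
    have hvstar : star v = z * ((1:A) - u) := by
      rw [hv, star_mul, hz'.star_eq, h1u.star_eq]
    have hsq : v * star v = ((1:A)-u) * (z*z) * ((1:A)-u) := by
      rw [hvstar, hv]; noncomm_ring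
    have hzz : z * z ≤ ‖z‖ • z := by
      have hzspec : ∀ t ∈ spectrum ℝ z, 0 ≤ t :=
        (StarOrderedRing.nonneg_iff_spectrum_nonneg (R := ℝ) z hz').mp hz
      have e1 : z * z = cfc (fun t : ℝ => t * t) z := by
        rw [cfc_mul _ _ z (by fun_prop) (by fun_prop), cfc_id' ℝ z]
      have e2 : ‖z‖ • z = cfc (fun t : ℝ => ‖z‖ * t) z := by
        have : (fun t : ℝ => ‖z‖ * t) = fun t : ℝ => ‖z‖ • t := by
          funext t; rw [smul_eq_mul]
        rw [this, cfc_smul ‖z‖ (fun t : ℝ => t) z (by fun_prop), cfc_id' ℝ z]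
      rw [e1, e2]
      refine cfc_mono (fun t ht => ?_) (by fun_prop) (by fun_prop)
      have h1 := hzspec t ht
      have h2 := spectrum.norm_le_norm_of_mem ht
      rw [Real.norm_eq_abs, abs_of_nonneg h1] at h2
      nlinarith
    set ν : ℝ := Real.sqrt ‖z‖ with hν
    set cc : A := ν • ((1:A) - u) with hcc
    have hccstar : star cc = cc := by
      rw [hcc, star_smul, star_trivial, h1u.star_eq]
    have hνν : ν * ν = ‖z‖ := Real.mul_self_sqrt (norm_nonneg z)
    have hconj : ∀ x : A, star cc * x * cc = ‖z‖ • (((1:A)-u) * x * ((1:A)-u)) := by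
      intro x
      rw [hccstar, hcc, smul_mul_assoc, smul_mul_assoc, mul_smul_comm, smul_smul, hνν]
    have hchain : v * star v ≤ ‖z‖ • (((1:A)-u) * w * ((1:A)-u)) := by
      calc v * star v = ((1:A)-u)*(z*z)*((1:A)-u) := hsq
        _ ≤ ((1:A)-u)*(‖z‖ • z)*((1:A)-u) := h1u.conjugate_le_conjugate hzz
        _ = star cc * z * cc := by
            rw [hconj z, mul_smul_comm, smul_mul_assoc]
        _ ≤ star cc * w * cc := star_left_conjugate_le_conjugate hzw cc
        _ = ‖z‖ • (((1:A)-u) * w * ((1:A)-u)) := hconj w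
    have hvv : (0:A) ≤ v * star v := by
      rw [hsq]
      have : (0:A) ≤ z * z := by
        have := star_mul_self_nonneg z
        rwa [hz'.star_eq] at this
      exact h1u.conjugate_nonneg this
    have hvb : ‖v‖ * ‖v‖ ≤ ‖z‖ * κ := by
      calc ‖v‖ * ‖v‖ = ‖v * star v‖ := CStarRing.norm_self_mul_star.symm
        _ ≤ ‖‖z‖ • (((1:A)-u) * w * ((1:A)-u))‖ :=
            CStarAlgebra.norm_le_norm_of_nonneg_of_le hvv hchain
        _ = ‖z‖ * ‖((1:A)-u) * w * ((1:A)-u)‖ := by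
            rw [norm_smul, Real.norm_eq_abs, abs_of_nonneg (norm_nonneg z)]
        _ ≤ ‖z‖ * κ := mul_le_mul_of_nonneg_left hnorm1 (norm_nonneg z)
    have hvε : ‖v‖ < ε := by
      nlinarith [norm_nonneg v, hvb, hκlt, hε, sq_nonneg (‖v‖ - ε)]
    refine ⟨u * z, J.mul_mem_right u z huJ, ?_⟩
    rw [dist_eq_norm, show z - u * z = v by rw [hv, sub_mul, one_mul]]
    exact hvε
  rwa [hJ.closure_eq] at hclos

open Filter Topology

theorem minimal_direct_limit
    {C : Type*} [NormedRing C] [StarRing C] [CStarRing C] [CompleteSpace C]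
    [NormedAlgebra ℂ C] [StarModule ℂ C]
    {D : Type*} [NormedRing D] [StarRing D] [CStarRing D] [CompleteSpace D]
    [NormedAlgebra ℂ D] [StarModule ℂ D]
    (α : C →⋆ₐ[ℂ] C) (hα : Function.Injective α)
    (ι : C →⋆ₐ[ℂ] D) (hι : Function.Injective ι)
    (αinf : D ≃⋆ₐ[ℂ] D)
    (hext : ∀ c : C, αinf (ι c) = ι (α c))
    (hdense : Dense (⋃ n : ℕ, (⇑αinf.symm)^[n] '' Set.range ι))
    (hmin : ∀ J : TwoSidedIdeal C, IsClosed (J : Set C) → (∀ c ∈ J, α c ∈ J) →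
      J = ⊥ ∨ J = ⊤) :
    ∀ J : TwoSidedIdeal D, IsClosed (J : Set D) → (∀ x ∈ J, αinf x ∈ J) →
      J = ⊥ ∨ ((∃ c : C, c ≠ 0 ∧ ι c ∈ J) ∧ J = ⊤) := by
  letI : CStarAlgebra C :=
    { ‹NormedRing C›, ‹StarRing C›, ‹CStarRing C›, ‹CompleteSpace C›,
      ‹NormedAlgebra ℂ C›, ‹StarModule ℂ C› with }
  letI : CStarAlgebra D :=
    { ‹NormedRing D›, ‹StarRing D›, ‹CStarRing D›, ‹CompleteSpace D›,
      ‹NormedAlgebra ℂ D›, ‹StarModule ℂ D› with }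
  letI : PartialOrder D := CStarAlgebra.spectralOrder D
  letI : StarOrderedRing D := CStarAlgebra.spectralOrderedRing D
  intro J hJc hJinv
  by_cases hbot : J = ⊥
  · exact Or.inl hbot
  right
  -- find a nonzero element of J
  obtain ⟨a, haJ, ha0⟩ : ∃ a : D, a ∈ J ∧ a ≠ 0 := by
    by_contra hcon
    push_neg at hcon
    exact hbot <| eq_bot_iff.mpr fun d hd => (TwoSidedIdeal.mem_bot (R := D)).mpr (hcon d hd)
  haveI hDnt : Nontrivial D := ⟨a, 0, ha0⟩
  -- basic isometry facts
  have hιnorm : ∀ c : C, ‖ι c‖ = ‖c‖ := fun c => NonUnitalStarAlgHom.norm_map ι hι c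
  have hιcont : Continuous ι := (AddMonoidHomClass.isometry_of_norm ι hιnorm).continuous
  have hαnorm : ∀ d : D, ‖αinf d‖ = ‖d‖ := fun d =>
    NonUnitalStarAlgHom.norm_map αinf αinf.injective d
  have hIterInv : ∀ (n : ℕ) (d : D), (⇑αinf)^[n] ((⇑αinf.symm)^[n] d) = d := fun n =>
    (Function.LeftInverse.iterate αinf.apply_symm_apply n)
  have hIterNorm : ∀ (n : ℕ) (d e : D), ‖(⇑αinf)^[n] d - (⇑αinf)^[n] e‖ = ‖d - e‖ := by
    intro n
    induction n with
    | zero => intro d e; simp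
    | succ n ih =>
      intro d e
      rw [Function.iterate_succ_apply', Function.iterate_succ_apply',
        ← map_sub αinf, hαnorm, ih]
  have hIterZero : ∀ n : ℕ, (⇑αinf)^[n] (0 : D) = 0 := fun n =>
    Function.iterate_fixed (map_zero αinf) n
  have hIterMem : ∀ (n : ℕ) (d : D), d ∈ J → (⇑αinf)^[n] d ∈ J := by
    intro n
    induction n with
    | zero => exact fun d hd => hd
    | succ n ih =>
      intro d hd
      rw [Function.iterate_succ_apply']
      exact hJinv _ (ih d hd)
  have hIterMulStar : ∀ (n : ℕ) (d : D),
      (⇑αinf)^[n] (star d * d) = star ((⇑αinf)^[n] d) * (⇑αinf)^[n] d := by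
    intro n
    induction n with
    | zero => intro d; simp
    | succ n ih =>
      intro d
      rw [Function.iterate_succ_apply', ih, map_mul, map_star,
        Function.iterate_succ_apply']
  have halg_sa : ∀ s : ℝ, IsSelfAdjoint (algebraMap ℝ D s) := fun s =>
    IsSelfAdjoint.algebraMap D (isSelfAdjoint_iff.mpr rfl)
  have halg_nonneg : ∀ s : ℝ, 0 ≤ s → 0 ≤ algebraMap ℝ D s := by
    intro s hs
    have h1 := star_mul_self_nonneg (algebraMap ℝ D (Real.sqrt s))
    rwa [(halg_sa (Real.sqrt s)).star_eq, ← map_mul,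
      Real.mul_self_sqrt hs] at h1
  -- the key step: find a nonzero element of C whose image lies in J
  have key : ∃ c : C, c ≠ 0 ∧ ι c ∈ J := by
    set x : D := star a * a with hx
    have hxJ : x ∈ J := J.mul_mem_left (star a) a haJ
    have hx0 : x ≠ 0 := fun hxx => ha0 (by
      rwa [hx, CStarRing.star_mul_self_eq_zero_iff] at hxx)
    have hr : 0 < ‖x‖ := norm_pos_iff.mpr hx0
    set ε : ℝ := ‖x‖/4 with hεdef
    have hε : 0 < ε := by positivity
    -- dense approximation
    have hxcl := hdense x
    rw [Metric.mem_closure_iff] at hxcl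
    obtain ⟨dd, hdd, hdist⟩ := hxcl ε hε
    rw [Set.mem_iUnion] at hdd
    obtain ⟨n, hdd⟩ := hdd
    obtain ⟨d₀, ⟨c₀, rfl⟩, hdd2⟩ := hdd
    -- the image of x
    set y : D := (⇑αinf)^[n] x with hy
    have hyJ : y ∈ J := hIterMem n x hxJ
    have hy0 : 0 ≤ y := by
      rw [hy, hx, hIterMulStar n a]
      exact star_mul_self_nonneg _
    have hysa : IsSelfAdjoint y := .of_nonneg hy0
    have hynorm : ‖y‖ = ‖x‖ := by
      have := hIterNorm n x 0
      rwa [hIterZero n, sub_zero, sub_zero] at this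
    have happrox : ‖ι c₀ - y‖ < ε := by
      have h1 : (⇑αinf)^[n] dd = ι c₀ := by rw [← hdd2, hIterInv]
      calc ‖ι c₀ - y‖ = ‖(⇑αinf)^[n] dd - (⇑αinf)^[n] x‖ := by rw [h1, hy]
        _ = ‖dd - x‖ := hIterNorm n dd x
        _ < ε := by rwa [← dist_eq_norm, dist_comm]
    -- selfadjoint approximant
    set c' : C := (2:ℂ)⁻¹ • (c₀ + star c₀) with hc'
    have hc'sa : IsSelfAdjoint c' := by
      rw [hc', IsSelfAdjoint, star_smul, star_add, star_star, add_comm]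
      congr 1
      simp
    set b : D := ι c' with hb
    have hbsa : IsSelfAdjoint b := by
      rw [hb, IsSelfAdjoint, ← map_star, hc'sa.star_eq]
    have hby : ‖b - y‖ ≤ ε := by
      have hsplit : b - y = (2:ℂ)⁻¹ • ((ι c₀ - y) + star (ι c₀ - y)) := by
        rw [hb, hc', map_smul, map_add, map_star, star_sub, hysa.star_eq]
        module
      rw [hsplit]
      calc ‖(2:ℂ)⁻¹ • ((ι c₀ - y) + star (ι c₀ - y))‖
          = ‖(2:ℂ)⁻¹‖ * ‖(ι c₀ - y) + star (ι c₀ - y)‖ := norm_smul _ _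
        _ ≤ ‖(2:ℂ)⁻¹‖ * (‖ι c₀ - y‖ + ‖star (ι c₀ - y)‖) := by
            gcongr
            exact norm_add_le _ _
        _ = (2:ℝ)⁻¹ * (‖ι c₀ - y‖ + ‖ι c₀ - y‖) := by
            rw [norm_star]
            norm_num
        _ ≤ ε := by linarith [happrox]
    have hbnorm : ε < ‖b‖ := by
      have h1 : ‖y‖ - ‖b‖ ≤ ‖y - b‖ := norm_sub_norm_le y b
      have h2 : ‖y - b‖ = ‖b - y‖ := norm_sub_rev y b
      rw [hεdef] at *
      linarith [hby, hynorm, h1, h2, hr]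
    -- spectrum of b is bounded below by -ε
    have h_y_le : y ≤ algebraMap ℝ D ε + b := by
      have h1 : y - b ≤ algebraMap ℝ D ‖y - b‖ :=
        IsSelfAdjoint.le_algebraMap_norm_self (hysa.sub hbsa)
      have h2 : algebraMap ℝ D ‖y - b‖ ≤ algebraMap ℝ D ε := by
        have h3 := halg_nonneg (ε - ‖y - b‖) (by
          rw [norm_sub_rev]; linarith [hby])
        rw [map_sub] at h3
        exact sub_nonneg.mp h3
      have := h1.trans h2
      rw [sub_le_iff_le_add] at this
      exact this
    have hv0 : 0 ≤ algebraMap ℝ D ε + b := hy0.trans h_y_le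
    have hvsa : IsSelfAdjoint (algebraMap ℝ D ε + b) := (halg_sa ε).add hbsa
    have hspeclow : ∀ t ∈ spectrum ℝ b, -ε ≤ t := by
      intro t ht
      have h1 : t + ε ∈ spectrum ℝ (algebraMap ℝ D ε + b) :=
        spectrum.add_mem_add_iff.mpr ht
      have h2 := (StarOrderedRing.nonneg_iff_spectrum_nonneg (R := ℝ)
        (algebraMap ℝ D ε + b) hvsa).mp hv0 _ h1
      linarith
    have hnb : ‖b‖ ∈ spectrum ℝ b := by
      rcases CStarAlgebra.norm_or_neg_norm_mem_spectrum (a := b) hbsa with h | h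
      · exact h
      · have := hspeclow _ h
        have hb0 : 0 ≤ ‖b‖ := norm_nonneg b
        linarith
    -- the cut-off functions
    set f : ℝ → ℝ := fun t => max (t - ε) 0 with hf
    have hfc : Continuous f := (continuous_id.sub continuous_const).max continuous_const
    set F : ℝ → ℝ := fun t => (max (t - ε) 0)^3 with hF
    have hFc : Continuous F := hfc.pow 3
    set z : D := cfc F b with hzdef
    have hsub : b - algebraMap ℝ D ε = cfc (fun t : ℝ => t - ε) b := by
      rw [cfc_sub (fun t : ℝ => t) (fun _ : ℝ => ε) b (by fun_prop) (by fun_prop),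
        cfc_id' ℝ b, cfc_const ε b]
    have hzfact : z = cfc f b * (b - algebraMap ℝ D ε) * cfc f b := by
      rw [hsub, ← cfc_mul _ _ b (by fun_prop) (by fun_prop),
        ← cfc_mul _ _ b (by fun_prop) (by fun_prop)]
      apply cfc_congr
      intro t _
      rcases le_total t ε with h | h
      · simp [hF, hf, max_eq_right (by linarith : t - ε ≤ 0)]
      · rw [hF, hf]
        simp only [max_eq_left (by linarith : (0:ℝ) ≤ t - ε)]
        ring
    have hfsa : IsSelfAdjoint (cfc f b) := cfc_predicate f b
    have hwJ' : cfc f b * y * cfc f b ∈ J := by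
      rw [mul_assoc]
      exact J.mul_mem_left _ _ (J.mul_mem_right _ _ hyJ)
    have hz_nonneg : 0 ≤ z := by
      rw [hzdef]
      apply cfc_nonneg
      intro t _
      rw [hF]
      positivity
    have hba : b - algebraMap ℝ D ε ≤ y := by
      have h1 : b - y ≤ algebraMap ℝ D ‖b - y‖ :=
        IsSelfAdjoint.le_algebraMap_norm_self (hbsa.sub hysa)
      have h2 : algebraMap ℝ D ‖b - y‖ ≤ algebraMap ℝ D ε := by
        have h3 := halg_nonneg (ε - ‖b - y‖) (by linarith [hby])
        rw [map_sub] at h3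
        exact sub_nonneg.mp h3
      have h4 := h1.trans h2
      calc b - algebraMap ℝ D ε ≤ b - (b - y) := by
            exact sub_le_sub_left h4 b
        _ = y := by abel
    have hzle : z ≤ cfc f b * y * cfc f b := by
      rw [hzfact]
      exact hfsa.conjugate_le_conjugate hba
    have hzJ : z ∈ J := aux_hereditary J hJc hz_nonneg hzle hwJ'
    have hz0 : z ≠ 0 := by
      intro h0
      have h1 := norm_apply_le_norm_cfc F b hnb hFc.continuousOn hbsa
      rw [← hzdef, h0, norm_zero] at h1
      have h2 : 0 < F ‖b‖ := by
        rw [hF]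
        simp only [max_eq_left (by linarith [hbnorm] : (0:ℝ) ≤ ‖b‖ - ε)]
        have : 0 < ‖b‖ - ε := by linarith [hbnorm]
        positivity
      rw [Real.norm_eq_abs, abs_of_pos h2] at h1
      linarith
    have hmap : ι (cfc F c') = z := by
      rw [hzdef, hb]
      exact StarAlgHom.map_cfc ι F c' hFc.continuousOn hιcont hc'sa
        (by rw [← hb]; exact hbsa)
    refine ⟨cfc F c', fun h0 => hz0 (by rw [← hmap, h0, map_zero]), hmap ▸ hzJ⟩
  obtain ⟨c, hc0, hcJ⟩ := key
  refine ⟨⟨c, hc0, hcJ⟩, ?_⟩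
  -- the pulled-back ideal
  set I : TwoSidedIdeal C := J.comap ι with hI
  have hIset : (I : Set C) = ⇑ι ⁻¹' (J : Set D) := by
    ext c''
    exact TwoSidedIdeal.mem_comap ι
  have hIclosed : IsClosed (I : Set C) := by
    rw [hIset]
    exact hJc.preimage hιcont
  have hIinv : ∀ c'' ∈ I, α c'' ∈ I := by
    intro c'' hc''
    rw [hI, TwoSidedIdeal.mem_comap ι] at *
    rw [← hext]
    exact hJinv _ hc''
  rcases hmin I hIclosed hIinv with hI0 | hItop
  · exfalso
    have hcI : c ∈ I := (TwoSidedIdeal.mem_comap ι).mpr hcJ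
    rw [hI0] at hcI
    exact hc0 ((TwoSidedIdeal.mem_bot (R := C)).mp hcI)
  · have h1 : (1:C) ∈ I := by rw [hItop]; trivial
    have h1J : (1:D) ∈ J := by
      have := (TwoSidedIdeal.mem_comap ι).mp h1
      rwa [map_one] at this
    exact TwoSidedIdeal.eq_top J h1J
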